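/- Let d, d' ≥ 1 and let N be a completely positive trace-preserving linear map from d×d to d'×d' complex matrices, with Choi state π_N := (id_d ⊗ N)(ψ_d), where ψ_d = (1/d)·∑_{i,j=1}^d |ii⟩⟨jj| is the maximally entangled state on C^d ⊗ C^d. Then the infimum over separable density matrices σ on C^d ⊗ C^{d'} of D_max(π_N‖σ) is at most E_max(N), and E_max(N) is at most the infimum over separable density matrices σ on C^d ⊗ C^{d'} satisfying Tr_B σ = I_d/d of D_max(π_N‖σ). (Here Tr_B denotes the partial trace over the second factor: (Tr_B σ)_{ij} = ∑_b σ_{(i,b),(j,b)}.) -/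

import Mathlib

open scoped Kronecker ComplexOrder
open Matrix

noncomputable section

/-- A density matrix: positive semidefinite with unit trace. -/
def IsDensity {n : Type*} [Fintype n] (M : Matrix n n ℂ) : Prop :=
  M.PosSemidef ∧ M.trace = 1

/-- A bipartite density matrix is separable if it is a finite convex combination of
Kronecker products of density matrices on the two factors. -/
def SepState {m k : Type*} [Fintype m] [Fintype k]
    (M : Matrix (m × k) (m × k) ℂ) : Prop :=
  ∃ (L : ℕ) (p : Fin L → ℝ) (P : Fin L → Matrix m m ℂ) (Q : Fin L → Matrix k k ℂ),
    (∀ i, 0 ≤ p i) ∧ (∑ i, p i) = 1 ∧ (∀ i, IsDensity (P i)) ∧ (∀ i, IsDensity (Q i)) ∧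
    M = ∑ i, ((p i : ℂ) • (P i ⊗ₖ Q i))

/-- Max-relative entropy `D_max(ρ‖σ) = inf {x : 2^x • σ - ρ ⪰ 0}`, `+∞` if no such `x`. -/
def Dmax {n : Type*} [Fintype n] (ρ σ : Matrix n n ℂ) : EReal :=
  sInf {x : EReal | ∃ r : ℝ, x = (r : EReal) ∧ (((2:ℝ) ^ r) • σ - ρ).PosSemidef}

/-- Partial trace over the second tensor factor. -/
def ptraceB {m k : Type*} [Fintype k] (M : Matrix (m × k) (m × k) ℂ) : Matrix m m ℂ :=
  Matrix.of fun i j => ∑ b, M (i, b) (j, b)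

/-- The extension `id ⊗ T` of a map on matrices to a bipartite system. -/
def idTensorFun {n d d' : Type*} (T : Matrix d d ℂ → Matrix d' d' ℂ)
    (M : Matrix (n × d) (n × d) ℂ) : Matrix (n × d') (n × d') ℂ :=
  Matrix.of fun p q => T (Matrix.of fun a b => M (p.1, a) (q.1, b)) p.2 q.2

/-- The maximally entangled state `ψ_d = (1/d) ∑_{i,j} |ii⟩⟨jj|`. -/
def maxEnt (d : ℕ) : Matrix (Fin d × Fin d) (Fin d × Fin d) ℂ :=
  Matrix.of fun p q => if p.1 = p.2 ∧ q.1 = q.2 then (1 / (d:ℂ)) else 0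

/-- Trace preservation for a linear map on matrices. -/
def IsTracePreserving {d d' : ℕ}
    (N : Matrix (Fin d) (Fin d) ℂ →ₗ[ℂ] Matrix (Fin d') (Fin d') ℂ) : Prop :=
  ∀ M, (N M).trace = M.trace

/-- Complete positivity: `id_n ⊗ N` maps positive semidefinite matrices to positive
semidefinite matrices, for every finite ancilla dimension `n`. -/
def IsCompletelyPositive {d d' : ℕ}
    (N : Matrix (Fin d) (Fin d) ℂ →ₗ[ℂ] Matrix (Fin d') (Fin d') ℂ) : Prop :=
  ∀ (n : ℕ) (M : Matrix (Fin n × Fin d) (Fin n × Fin d) ℂ),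
    M.PosSemidef → (idTensorFun (⇑N) M).PosSemidef

/-- Max-relative entropy of entanglement of a channel: supremum over all finite ancilla
dimensions `n ≥ 1` and input states `ρ` of the infimum over separable states `σ` of
`D_max((id_n ⊗ N)(ρ) ‖ σ)`. -/
def EmaxChannel {d d' : ℕ}
    (N : Matrix (Fin d) (Fin d) ℂ →ₗ[ℂ] Matrix (Fin d') (Fin d') ℂ) : EReal :=
  sSup {x : EReal | ∃ n : ℕ, 0 < n ∧ ∃ ρ : Matrix (Fin n × Fin d) (Fin n × Fin d) ℂ,
    IsDensity ρ ∧
    x = sInf {y : EReal | ∃ σ : Matrix (Fin n × Fin d') (Fin n × Fin d') ℂ,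
      IsDensity σ ∧ SepState σ ∧ y = Dmax (idTensorFun (⇑N) ρ) σ}}

namespace Stmt0Aux

set_option linter.unusedSectionVars false

lemma posSemidef_iff_eq_transpose_mul_self {ι : Type*} [Fintype ι] {M : Matrix ι ι ℂ} :
    M.PosSemidef ↔ ∃ B : Matrix ι ι ℂ, M = Bᴴ * B := by
  classical
  open scoped MatrixOrder in
  constructor
  · intro h
    obtain ⟨B, hB⟩ := CStarAlgebra.nonneg_iff_eq_star_mul_self.mp h.nonneg
    exact ⟨B, hB⟩
  · rintro ⟨B, rfl⟩
    exact posSemidef_conjTranspose_mul_self B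

variable {α β γ : Type*} [Fintype α] [Fintype β] [Fintype γ]

/-- The contraction `(Λ_ρ ⊗ id)(M)` with prefactor `c`. -/
def contractMap (c : ℝ) (ρ : Matrix (α × β) (α × β) ℂ)
    (M : Matrix (β × γ) (β × γ) ℂ) : Matrix (α × γ) (α × γ) ℂ :=
  Matrix.of fun p q => (c : ℂ) * ∑ i, ∑ j, ρ (p.1, i) (q.1, j) * M (i, p.2) (j, q.2)

/-- The local map `Λ_ρ` itself. -/
def lpMap (c : ℝ) (ρ : Matrix (α × β) (α × β) ℂ) (P : Matrix β β ℂ) : Matrix α α ℂ :=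
  Matrix.of fun m m' => (c : ℂ) * ∑ i, ∑ j, ρ (m, i) (m', j) * P i j

lemma contractMap_posSemidef {c : ℝ} (hc : 0 ≤ c) {ρ : Matrix (α × β) (α × β) ℂ}
    (hρ : ρ.PosSemidef) {M : Matrix (β × γ) (β × γ) ℂ} (hM : M.PosSemidef) :
    (contractMap c ρ M).PosSemidef := by
  obtain ⟨A, hA⟩ := posSemidef_iff_eq_transpose_mul_self.mp hρ
  obtain ⟨B, hB⟩ := posSemidef_iff_eq_transpose_mul_self.mp hM
  set s : ℂ := (Real.sqrt c : ℂ) with hs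
  have hss : s * s = (c : ℂ) := by
    rw [hs, ← Complex.ofReal_mul, Real.mul_self_sqrt hc]
  have hstars : star s = s := by
    rw [hs]; exact Complex.conj_ofReal _
  set C : Matrix ((α × β) × (β × γ)) (α × γ) ℂ :=
    Matrix.of (fun k q => s * ∑ j, A k.1 (q.1, j) * B k.2 (j, q.2)) with hC
  have key : contractMap c ρ M = Cᴴ * C := by
    ext p q
    have hterm : ∀ k : (α × β) × (β × γ), star (C k p) * C k q =
        ∑ ij : β × β, (c : ℂ) *
          (star (A k.1 (p.1, ij.1)) * A k.1 (q.1, ij.2) *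
            (star (B k.2 (ij.1, p.2)) * B k.2 (ij.2, q.2))) := by
      intro k
      have h1 : star (C k p) = s * ∑ i, star (A k.1 (p.1, i)) * star (B k.2 (i, p.2)) := by
        simp only [hC, Matrix.of_apply, star_mul', hstars, star_sum, mul_comm]
      have h2 : C k q = s * ∑ j, A k.1 (q.1, j) * B k.2 (j, q.2) := rfl
      rw [h1, h2]
      rw [show (s * ∑ i, star (A k.1 (p.1, i)) * star (B k.2 (i, p.2))) *
          (s * ∑ j, A k.1 (q.1, j) * B k.2 (j, q.2)) =
          (s * s) * ((∑ i, star (A k.1 (p.1, i)) * star (B k.2 (i, p.2))) *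
            (∑ j, A k.1 (q.1, j) * B k.2 (j, q.2))) by ring]
      rw [hss, Finset.sum_mul_sum]
      rw [show (∑ ij : β × β, (c : ℂ) *
          (star (A k.1 (p.1, ij.1)) * A k.1 (q.1, ij.2) *
            (star (B k.2 (ij.1, p.2)) * B k.2 (ij.2, q.2)))) =
          ∑ i : β, ∑ j : β, (c : ℂ) *
          (star (A k.1 (p.1, i)) * A k.1 (q.1, j) *
            (star (B k.2 (i, p.2)) * B k.2 (j, q.2))) from Fintype.sum_prod_type _]
      rw [Finset.mul_sum]
      refine Finset.sum_congr rfl fun i _ => ?_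
      rw [Finset.mul_sum]
      refine Finset.sum_congr rfl fun j _ => by ring
    have hL : (Cᴴ * C) p q = ∑ k : (α × β) × (β × γ), star (C k p) * C k q := by
      simp [Matrix.mul_apply, Matrix.conjTranspose_apply]
    rw [hL]
    have hR : contractMap c ρ M p q =
        ∑ ij : β × β, ∑ k : (α × β) × (β × γ), (c : ℂ) *
          (star (A k.1 (p.1, ij.1)) * A k.1 (q.1, ij.2) *
            (star (B k.2 (ij.1, p.2)) * B k.2 (ij.2, q.2))) := by
      have hρ' : ∀ i j, ρ (p.1, i) (q.1, j) =
          ∑ k1 : α × β, star (A k1 (p.1, i)) * A k1 (q.1, j) := by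
        intro i j
        rw [hA]
        simp [Matrix.mul_apply, Matrix.conjTranspose_apply]
      have hM' : ∀ (i j : β), M (i, p.2) (j, q.2) =
          ∑ k2 : β × γ, star (B k2 (i, p.2)) * B k2 (j, q.2) := by
        intro i j
        rw [hB]
        simp [Matrix.mul_apply, Matrix.conjTranspose_apply]
      have hpt : ∀ ij : β × β,
          ∑ k : (α × β) × (β × γ), (c : ℂ) *
            (star (A k.1 (p.1, ij.1)) * A k.1 (q.1, ij.2) *
              (star (B k.2 (ij.1, p.2)) * B k.2 (ij.2, q.2))) =
          (c : ℂ) * (ρ (p.1, ij.1) (q.1, ij.2) * M (ij.1, p.2) (ij.2, q.2)) := by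
        intro ij
        rw [hρ' ij.1 ij.2, hM' ij.1 ij.2, Finset.sum_mul_sum, Fintype.sum_prod_type]
        simp only [Finset.mul_sum]
      simp only [contractMap, Matrix.of_apply, hpt]
      simp only [Finset.mul_sum]
      exact (Fintype.sum_prod_type'
        (fun i j : β => (c:ℂ) * (ρ (p.1, i) (q.1, j) * M (i, p.2) (j, q.2)))).symm
    rw [hR]
    simp only [hterm]
    exact Finset.sum_comm
  rw [key]
  exact posSemidef_conjTranspose_mul_self C

lemma contractMap_rsmul_sub (c : ℝ) (ρ : Matrix (α × β) (α × β) ℂ) (x : ℝ)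
    (M M' : Matrix (β × γ) (β × γ) ℂ) :
    contractMap c ρ (x • M - M') = x • contractMap c ρ M - contractMap c ρ M' := by
  ext p q
  simp only [contractMap, Matrix.of_apply, Matrix.sub_apply, Matrix.smul_apply,
    Complex.real_smul]
  have h : ∀ i j, ρ (p.1, i) (q.1, j) * ((x:ℂ) * M (i, p.2) (j, q.2) - M' (i, p.2) (j, q.2)) =
      (x:ℂ) * (ρ (p.1, i) (q.1, j) * M (i, p.2) (j, q.2)) -
        ρ (p.1, i) (q.1, j) * M' (i, p.2) (j, q.2) := fun i j => by ring
  simp only [h, Finset.sum_sub_distrib, ← Finset.mul_sum]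
  ring

lemma contractMap_sum {L : ℕ} (c : ℝ) (ρ : Matrix (α × β) (α × β) ℂ)
    (f : Fin L → Matrix (β × γ) (β × γ) ℂ) :
    contractMap c ρ (∑ i, f i) = ∑ i, contractMap c ρ (f i) := by
  ext p q
  simp only [contractMap, Matrix.of_apply, Matrix.sum_apply, Finset.mul_sum]
  exact (Finset.sum_congr rfl fun i _ => Finset.sum_comm).trans Finset.sum_comm

lemma contractMap_csmul (c : ℝ) (ρ : Matrix (α × β) (α × β) ℂ) (z : ℂ)
    (M : Matrix (β × γ) (β × γ) ℂ) :
    contractMap c ρ (z • M) = z • contractMap c ρ M := by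
  ext p q
  simp only [contractMap, Matrix.of_apply, Matrix.smul_apply, smul_eq_mul]
  have h : ∀ i j, ρ (p.1, i) (q.1, j) * (z * M (i, p.2) (j, q.2)) =
      z * (ρ (p.1, i) (q.1, j) * M (i, p.2) (j, q.2)) := fun i j => by ring
  simp only [h, ← Finset.mul_sum]
  ring

lemma contractMap_kron (c : ℝ) (ρ : Matrix (α × β) (α × β) ℂ)
    (P : Matrix β β ℂ) (Q : Matrix γ γ ℂ) :
    contractMap c ρ (P ⊗ₖ Q) = (lpMap c ρ P) ⊗ₖ Q := by
  ext p q
  simp only [contractMap, lpMap, Matrix.of_apply, Matrix.kroneckerMap_apply]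
  rw [mul_assoc, Finset.sum_mul]
  congr 1
  refine Finset.sum_congr rfl fun i _ => ?_
  rw [Finset.sum_mul]
  exact Finset.sum_congr rfl fun j _ => by ring

lemma psd_trace_nonneg {M : Matrix α α ℂ} (h : M.PosSemidef) : 0 ≤ M.trace := by
  obtain ⟨B, rfl⟩ := posSemidef_iff_eq_transpose_mul_self.mp h
  rw [Matrix.trace]
  refine Finset.sum_nonneg fun j _ => ?_
  rw [Matrix.diag_apply, Matrix.mul_apply]
  refine Finset.sum_nonneg fun k _ => ?_
  simpa [Matrix.conjTranspose_apply] using star_mul_self_nonneg (B k j)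

lemma psd_eq_zero_of_trace_eq_zero {M : Matrix α α ℂ} (h : M.PosSemidef)
    (ht : M.trace = 0) : M = 0 := by
  obtain ⟨B, rfl⟩ := posSemidef_iff_eq_transpose_mul_self.mp h
  suffices hB : B = 0 by simp [hB]
  have hsum : ∑ j, ∑ k, star (B k j) * B k j = 0 := by
    simpa [Matrix.trace, Matrix.diag_apply, Matrix.mul_apply,
      Matrix.conjTranspose_apply] using ht
  have hcol : ∀ j ∈ Finset.univ, (∑ k, star (B k j) * B k j) = 0 := by
    rw [← Finset.sum_eq_zero_iff_of_nonneg]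
    · exact hsum
    · intro j _
      exact Finset.sum_nonneg fun k _ => star_mul_self_nonneg _
  ext k j
  have h0 := (Finset.sum_eq_zero_iff_of_nonneg
    (fun k _ => star_mul_self_nonneg (B k j))).mp (hcol j (Finset.mem_univ j)) k
    (Finset.mem_univ k)
  rcases mul_eq_zero.mp h0 with h1 | h1
  · simpa using star_eq_zero.mp h1
  · simpa using h1

lemma psd_trace_re {M : Matrix α α ℂ} (h : M.PosSemidef) :
    M.trace = ((M.trace.re : ℝ) : ℂ) ∧ 0 ≤ M.trace.re := by
  have h0 := psd_trace_nonneg h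
  rw [Complex.le_def] at h0
  simp only [Complex.zero_re, Complex.zero_im] at h0
  exact ⟨Complex.ext (by simp) (by simp [← h0.2]), h0.1⟩

lemma psd_rsmul {r : ℝ} (hr : 0 ≤ r) {M : Matrix α α ℂ} (h : M.PosSemidef) :
    ((r : ℂ) • M).PosSemidef := by
  obtain ⟨B, rfl⟩ := posSemidef_iff_eq_transpose_mul_self.mp h
  have key : (r : ℂ) • (Bᴴ * B) = ((Real.sqrt r : ℂ) • B)ᴴ * ((Real.sqrt r : ℂ) • B) := by
    rw [Matrix.conjTranspose_smul, Matrix.smul_mul, Matrix.mul_smul, smul_smul]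
    congr 1
    rw [Complex.star_def, Complex.conj_ofReal, ← Complex.ofReal_mul, Real.mul_self_sqrt hr]
  rw [key]
  exact posSemidef_conjTranspose_mul_self _

lemma lpMap_posSemidef {c : ℝ} (hc : 0 ≤ c) {ρ : Matrix (α × β) (α × β) ℂ}
    (hρ : ρ.PosSemidef) {P : Matrix β β ℂ} (hP : P.PosSemidef) :
    (lpMap c ρ P).PosSemidef := by
  have h1 : (P.submatrix (Prod.fst : β × Fin 1 → β) Prod.fst).PosSemidef := hP.submatrix _
  have h2 := contractMap_posSemidef hc hρ h1
  have h3 : lpMap c ρ P = (contractMap c ρ (P.submatrix Prod.fst Prod.fst)).submatrix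
      (fun m : α => (m, (0 : Fin 1))) (fun m => (m, 0)) := by
    ext m m'
    simp only [lpMap, contractMap, Matrix.submatrix_apply, Matrix.of_apply]
  rw [h3]
  exact h2.submatrix _

lemma trace_contractMap [DecidableEq β] (c : ℝ) (hcn : (c : ℂ) ≠ 0)
    {ρ : Matrix (α × β) (α × β) ℂ} {M : Matrix (β × γ) (β × γ) ℂ}
    (hptr : ∀ i j : β, (∑ b, M (i, b) (j, b)) = (c : ℂ)⁻¹ * (if i = j then 1 else 0)) :
    (contractMap c ρ M).trace = ρ.trace := by
  rw [Matrix.trace, Matrix.trace]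
  rw [show (∑ p, (contractMap c ρ M).diag p) =
      ∑ m : α, ∑ b : γ, (contractMap c ρ M) (m, b) (m, b) from
        Fintype.sum_prod_type _]
  rw [show (∑ p, ρ.diag p) = ∑ m : α, ∑ i : β, ρ (m, i) (m, i) from
        Fintype.sum_prod_type _]
  refine Finset.sum_congr rfl fun m _ => ?_
  have step1 : (∑ b : γ, (contractMap c ρ M) (m, b) (m, b)) =
      (c : ℂ) * ∑ i, ∑ j, ρ (m, i) (m, j) * ∑ b, M (i, b) (j, b) := by
    simp only [contractMap, Matrix.of_apply]
    rw [← Finset.mul_sum]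
    congr 1
    rw [Finset.sum_comm]
    refine Finset.sum_congr rfl fun i _ => ?_
    rw [Finset.sum_comm]
    refine Finset.sum_congr rfl fun j _ => ?_
    rw [Finset.mul_sum]
  rw [step1]
  simp only [hptr, mul_ite, mul_one, mul_zero]
  simp only [mul_ite, mul_zero, Finset.sum_ite_eq, Finset.mem_univ, if_true]
  rw [← Finset.sum_mul, mul_comm ((c:ℂ)) _, mul_assoc, inv_mul_cancel₀ hcn, mul_one]

lemma contractMap_choi {n d d' : ℕ} (hd : 0 < d)
    (N : Matrix (Fin d) (Fin d) ℂ →ₗ[ℂ] Matrix (Fin d') (Fin d') ℂ)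
    (ρ : Matrix (Fin n × Fin d) (Fin n × Fin d) ℂ) :
    contractMap (d : ℝ) ρ (idTensorFun (⇑N) (maxEnt d)) = idTensorFun (⇑N) ρ := by
  have hdne : ((d : ℕ) : ℂ) ≠ 0 := Nat.cast_ne_zero.mpr hd.ne'
  ext p q
  obtain ⟨m, b⟩ := p
  obtain ⟨m', b'⟩ := q
  have hinner : ∀ i j : Fin d,
      (Matrix.of fun a a' => maxEnt d (i, a) (j, a')) =
        ((d:ℂ))⁻¹ • Matrix.single i j (1:ℂ) := by
    intro i j
    ext a a'
    simp only [maxEnt, Matrix.of_apply, Matrix.smul_apply, Matrix.single,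
      smul_eq_mul, mul_ite, mul_one, mul_zero, one_div]
  have hexp : (Matrix.of fun a a' => ρ (m, a) (m', a')) =
      ∑ i, ∑ j, ρ (m, i) (m', j) • Matrix.single i j (1:ℂ) := by
    conv_lhs => rw [matrix_eq_sum_single (Matrix.of fun a a' => ρ (m, a) (m', a'))]
    refine Finset.sum_congr rfl fun i _ => Finset.sum_congr rfl fun j _ => ?_
    rw [Matrix.smul_single, smul_eq_mul, mul_one]
    rfl
  simp only [contractMap, idTensorFun, Matrix.of_apply]
  rw [hexp]
  simp only [map_sum, _root_.map_smul, Matrix.sum_apply, Matrix.smul_apply, smul_eq_mul]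
  simp only [hinner, _root_.map_smul, Matrix.smul_apply, smul_eq_mul]
  push_cast
  rw [Finset.mul_sum]
  refine Finset.sum_congr rfl fun i _ => ?_
  rw [Finset.mul_sum]
  refine Finset.sum_congr rfl fun j _ => ?_
  rw [show ((d:ℕ):ℂ) * (ρ (m, i) (m', j) * (((d:ℕ):ℂ)⁻¹ * (N (Matrix.single i j 1)) b b')) =
      (((d:ℕ):ℂ) * ((d:ℕ):ℂ)⁻¹) * (ρ (m, i) (m', j) * (N (Matrix.single i j 1)) b b')
      from by ring, mul_inv_cancel₀ hdne, one_mul]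

end Stmt0Aux

open Stmt0Aux

lemma maxEnt_isDensity {d : ℕ} (hd : 0 < d) : IsDensity (maxEnt d) := by
  have hdne : ((d : ℕ) : ℂ) ≠ 0 := Nat.cast_ne_zero.mpr hd.ne'
  constructor
  · set t : ℂ := ((Real.sqrt ((d:ℝ))⁻¹ : ℝ) : ℂ) with ht
    set B : Matrix (Fin 1) (Fin d × Fin d) ℂ :=
      Matrix.of (fun _ p => if p.1 = p.2 then t else 0) with hB
    have key : maxEnt d = Bᴴ * B := by
      ext p q
      simp only [maxEnt, Matrix.of_apply, Matrix.mul_apply, Matrix.conjTranspose_apply, hB]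
      rw [Fin.sum_univ_one]
      have hst : star t = t := Complex.conj_ofReal _
      have htt : t * t = ((d:ℂ))⁻¹ := by
        rw [ht, ← Complex.ofReal_mul, Real.mul_self_sqrt (inv_nonneg.mpr (Nat.cast_nonneg d)),
          Complex.ofReal_inv, Complex.ofReal_natCast]
      by_cases h1 : p.1 = p.2 <;> by_cases h2 : q.1 = q.2 <;>
        simp [h1, h2, hst, htt, one_div]
    rw [key]
    exact posSemidef_conjTranspose_mul_self B
  · rw [Matrix.trace]
    rw [show (∑ p, (maxEnt d).diag p) = ∑ i : Fin d, ∑ j : Fin d, maxEnt d (i, j) (i, j) from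
      Fintype.sum_prod_type _]
    simp only [maxEnt, Matrix.of_apply]
    simp only [and_self, Finset.sum_ite_eq, Finset.mem_univ, if_true]
    simp [Finset.card_univ, one_div]
    field_simp

lemma invCard_one_isDensity {n : ℕ} (hn : 0 < n) :
    IsDensity (((n:ℂ))⁻¹ • (1 : Matrix (Fin n) (Fin n) ℂ)) := by
  have hne : ((n : ℕ) : ℂ) ≠ 0 := Nat.cast_ne_zero.mpr hn.ne'
  constructor
  · have key : ((n:ℂ))⁻¹ • (1 : Matrix (Fin n) (Fin n) ℂ) =
        (((((n:ℝ))⁻¹ : ℝ)) : ℂ) • 1 := by push_cast; rfl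
    rw [key]
    exact psd_rsmul (inv_nonneg.mpr (Nat.cast_nonneg n)) Matrix.PosSemidef.one
  · rw [Matrix.trace_smul, Matrix.trace_one]
    simp [Finset.card_univ]
    field_simp

theorem stmt0 (d d' : ℕ) (hd : 1 ≤ d) (hd' : 1 ≤ d')
    (N : Matrix (Fin d) (Fin d) ℂ →ₗ[ℂ] Matrix (Fin d') (Fin d') ℂ)
    (hCP : IsCompletelyPositive N) (hTP : IsTracePreserving N) :
    sInf {y : EReal | ∃ σ : Matrix (Fin d × Fin d') (Fin d × Fin d') ℂ,
        IsDensity σ ∧ SepState σ ∧ y = Dmax (idTensorFun (⇑N) (maxEnt d)) σ}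
      ≤ EmaxChannel N ∧
    EmaxChannel N ≤
      sInf {y : EReal | ∃ σ : Matrix (Fin d × Fin d') (Fin d × Fin d') ℂ,
        IsDensity σ ∧ SepState σ ∧
        ptraceB σ = ((d : ℂ))⁻¹ • (1 : Matrix (Fin d) (Fin d) ℂ) ∧
        y = Dmax (idTensorFun (⇑N) (maxEnt d)) σ} := by
  have hd0 : 0 < d := hd
  have hdne : ((d : ℕ) : ℂ) ≠ 0 := Nat.cast_ne_zero.mpr hd0.ne'
  constructor
  · exact le_sSup ⟨d, hd0, maxEnt d, maxEnt_isDensity hd0, rfl⟩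
  · apply sSup_le
    rintro x ⟨n, hn, ρ, hρ, rfl⟩
    apply le_sInf
    rintro y ⟨σ, hσden, hσsep, hσptr, rfl⟩
    -- pointwise form of the partial trace hypothesis
    have hptr' : ∀ i j : Fin d, (∑ b, σ (i, b) (j, b)) =
        (((d:ℕ):ℝ) : ℂ)⁻¹ * (if i = j then 1 else 0) := by
      intro i j
      have h0 : ptraceB σ i j = (((d:ℂ))⁻¹ • (1 : Matrix (Fin d) (Fin d) ℂ)) i j := by
        rw [hσptr]
      simpa [ptraceB, Matrix.smul_apply, Matrix.one_apply, smul_eq_mul] using h0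
    set σ' := contractMap ((d:ℕ):ℝ) ρ σ with hσ'def
    have hσ'psd : σ'.PosSemidef :=
      contractMap_posSemidef (Nat.cast_nonneg d) hρ.1 hσden.1
    have hσ'tr : σ'.trace = 1 := by
      rw [hσ'def, trace_contractMap _ (by exact_mod_cast hdne) hptr', hρ.2]
    have hσ'den : IsDensity σ' := ⟨hσ'psd, hσ'tr⟩
    -- separability of σ'
    obtain ⟨L, p, P, Q, hp0, hp1, hPd, hQd, hσeq⟩ := hσsep
    have hσ'eq : σ' = ∑ i, (p i : ℂ) • ((lpMap ((d:ℕ):ℝ) ρ (P i)) ⊗ₖ Q i) := by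
      rw [hσ'def, hσeq, contractMap_sum]
      refine Finset.sum_congr rfl fun i _ => ?_
      rw [contractMap_csmul, contractMap_kron]
    have hlp_psd : ∀ i, (lpMap ((d:ℕ):ℝ) ρ (P i)).PosSemidef :=
      fun i => lpMap_posSemidef (Nat.cast_nonneg d) hρ.1 (hPd i).1
    set T : Fin L → ℝ := fun i => ((lpMap ((d:ℕ):ℝ) ρ (P i)).trace).re with hT
    have hTeq : ∀ i, (lpMap ((d:ℕ):ℝ) ρ (P i)).trace = ((T i : ℝ) : ℂ) :=
      fun i => (psd_trace_re (hlp_psd i)).1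
    have hT0 : ∀ i, 0 ≤ T i := fun i => (psd_trace_re (hlp_psd i)).2
    have htr1 : ∑ i, p i * T i = 1 := by
      have h1 : σ'.trace = 1 := hσ'tr
      rw [hσ'eq, Matrix.trace_sum] at h1
      simp only [Matrix.trace_smul, Matrix.trace_kronecker, hTeq, (hQd _).2, mul_one,
        smul_eq_mul] at h1
      have h2 : ((∑ i, p i * T i : ℝ) : ℂ) = ((1:ℝ) : ℂ) := by
        push_cast
        simpa using h1
      exact_mod_cast h2
    have hsep' : SepState σ' := by
      refine ⟨L, (fun i => p i * T i),
        (fun i => if h : T i = 0 then ((n:ℂ))⁻¹ • 1 else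
          ((T i : ℝ) : ℂ)⁻¹ • lpMap ((d:ℕ):ℝ) ρ (P i)), Q,
        fun i => mul_nonneg (hp0 i) (hT0 i), htr1, ?_, hQd, ?_⟩
      · intro i
        dsimp only
        by_cases h : T i = 0
        · rw [dif_pos h]
          exact invCard_one_isDensity hn
        · rw [dif_neg h]
          constructor
          · rw [show ((T i : ℝ) : ℂ)⁻¹ = ((((T i)⁻¹ : ℝ)) : ℂ) from (Complex.ofReal_inv _).symm]
            exact psd_rsmul (inv_nonneg.mpr (hT0 i)) (hlp_psd i)
          · rw [Matrix.trace_smul, hTeq i, smul_eq_mul,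
              inv_mul_cancel₀ (Complex.ofReal_ne_zero.mpr h)]
      · rw [hσ'eq]
        refine Finset.sum_congr rfl fun i _ => ?_
        dsimp only
        by_cases h : T i = 0
        · have hzero : lpMap ((d:ℕ):ℝ) ρ (P i) = 0 :=
            psd_eq_zero_of_trace_eq_zero (hlp_psd i) (by rw [hTeq i, h]; simp)
          rw [dif_pos h, hzero, h]
          simp
        · rw [dif_neg h, smul_kronecker, smul_smul]
          congr 1
          push_cast
          field_simp
    -- the Dmax comparison
    refine le_trans (sInf_le ⟨σ', hσ'den, hsep', rfl⟩) ?_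
    apply sInf_le_sInf
    rintro x ⟨r, rfl, hpsd⟩
    refine ⟨r, rfl, ?_⟩
    have hkey := contractMap_posSemidef (Nat.cast_nonneg d) hρ.1 hpsd
    rwa [contractMap_rsmul_sub, contractMap_choi hd0 N ρ] at hkey

end
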